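/- Let D ≥ 1, let (Θ, 𝒜, μ) be a probability space, and let k : Θ × ℝ^D → (0,∞) be measurable and, for each θ, differentiable in x. Define π(x) = ∫_Θ k(θ, x) dμ(θ), assumed finite, strictly positive, and differentiable with ∇π(x) = ∫_Θ ∇_x k(θ, x) dμ(θ) for all x. Let s : ℝ^D → ℝ^D be measurable and assume the finiteness of the integrals ∫_{ℝ^D} π(x) ‖∇ ln π(x)‖² dx, ∫_{ℝ^D} ∫_Θ k(θ,x) ‖∇_x ln k(θ,x)‖² dμ(θ) dx, and ∫_{ℝ^D} π(x) ‖s(x)‖² dx. Then ∫_{ℝ^D} π(x) ‖∇ ln π(x) − s(x)‖² dx − ∫_{ℝ^D} ∫_Θ k(θ,x) ‖∇_x ln k(θ,x) − s(x)‖² dμ(θ) dx = ∫_{ℝ^D} π(x) ‖∇ ln π(x)‖² dx − ∫_{ℝ^D} ∫_Θ k(θ,x) ‖∇_x ln k(θ,x)‖² dμ(θ) dx. In particular, this difference does not depend on s, so the two score-matching objectives have the same minimizers over s. -/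
import Mathlib

open MeasureTheory Real Set

/-- The gradient of a scalar function on `ℝ^D`, given coordinatewise by the
partial derivatives. -/
noncomputable def grad {D : ℕ} (f : (Fin D → ℝ) → ℝ) (x : Fin D → ℝ) : Fin D → ℝ :=
  fun i => fderiv ℝ f x (Pi.single i 1)

/-- The squared Euclidean norm `‖u‖² = ∑ᵢ uᵢ²` on `ℝ^D`. -/
noncomputable def sqnorm {D : ℕ} (u : Fin D → ℝ) : ℝ := ∑ i, u i ^ 2

lemma sqnorm_sub_expand {D : ℕ} (c : ℝ) (u v : Fin D → ℝ) :
    c * sqnorm (u - v) = c * sqnorm u - 2 * ∑ i, (c * u i) * v i + c * sqnorm v := by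
  simp only [sqnorm, Pi.sub_apply, Finset.mul_sum, ← Finset.sum_sub_distrib,
    ← Finset.sum_add_distrib]
  exact Finset.sum_congr rfl fun i _ => by ring

lemma grad_log {D : ℕ} (f : (Fin D → ℝ) → ℝ) (x : Fin D → ℝ)
    (hf : DifferentiableAt ℝ f x) (hfx : 0 < f x) (i : Fin D) :
    f x * grad (fun y => Real.log (f y)) x i = grad f x i := by
  have h : HasFDerivAt (fun y => Real.log (f y)) ((f x)⁻¹ • fderiv ℝ f x) x :=
    hf.hasFDerivAt.log hfx.ne'
  simp only [grad, h.fderiv, ContinuousLinearMap.smul_apply, smul_eq_mul]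
  field_simp

/-- The denoising score matching identity (Vincent) for a mixture density
`π(x) = ∫ k(θ,x) dμ(θ)`: the Fisher-divergence objective
`∫ π ‖∇ ln π − s‖²` and the conditional score-matching objective
`∫∫ k ‖∇ ln k − s‖²` differ by a constant not depending on `s`. -/
theorem denoising_score_matching_identity
    {D : ℕ} (hD : 1 ≤ D)
    {Θ : Type*} [MeasurableSpace Θ] (μ : Measure Θ) [IsProbabilityMeasure μ]
    (k : Θ → (Fin D → ℝ) → ℝ)
    (hkmeas : Measurable (Function.uncurry k))
    (hkpos : ∀ θ x, 0 < k θ x)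
    (hkdiff : ∀ θ, Differentiable ℝ (k θ))
    (pmix : (Fin D → ℝ) → ℝ)
    (hpmixint : ∀ x, Integrable (fun θ => k θ x) μ)
    (hpmix : ∀ x, pmix x = ∫ θ, k θ x ∂μ)
    (hpmixpos : ∀ x, 0 < pmix x)
    (hpmixdiff : Differentiable ℝ pmix)
    (hpmixgradint : ∀ x, Integrable (fun θ => grad (k θ) x) μ)
    (hpmixgrad : ∀ x, grad pmix x = ∫ θ, grad (k θ) x ∂μ)
    (s : (Fin D → ℝ) → Fin D → ℝ) (hs : Measurable s)
    (h1 : Integrable fun x => pmix x * sqnorm (grad (fun y => Real.log (pmix y)) x))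
    (h2 : Integrable (fun p : Θ × (Fin D → ℝ) =>
      k p.1 p.2 * sqnorm (grad (fun y => Real.log (k p.1 y)) p.2)) (μ.prod volume))
    (h3 : Integrable fun x => pmix x * sqnorm (s x)) :
    (∫ x, pmix x * sqnorm (grad (fun y => Real.log (pmix y)) x - s x)) -
        (∫ x, ∫ θ, k θ x * sqnorm (grad (fun y => Real.log (k θ y)) x - s x) ∂μ)
      = (∫ x, pmix x * sqnorm (grad (fun y => Real.log (pmix y)) x)) -
          (∫ x, ∫ θ, k θ x * sqnorm (grad (fun y => Real.log (k θ y)) x) ∂μ) := by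
  have pa : ∀ (x : Fin D → ℝ) i,
      pmix x * grad (fun y => Real.log (pmix y)) x i = grad pmix x i := fun x i =>
    grad_log pmix x (hpmixdiff x) (hpmixpos x) i
  have kb : ∀ θ (x : Fin D → ℝ) i,
      k θ x * grad (fun y => Real.log (k θ y)) x i = grad (k θ) x i := fun θ x i =>
    grad_log (k θ) x ((hkdiff θ) x) (hkpos θ x) i
  set ip : (Fin D → ℝ) → ℝ := fun x => ∑ i, grad pmix x i * s x i with hipdef
  -- measurability of ip
  have hipmeas : Measurable ip := by
    rw [hipdef]
    simp only [grad]
    exact Finset.measurable_sum _ fun i _ =>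
      (measurable_fderiv_apply_const ℝ pmix (Pi.single i 1 : Fin D → ℝ)).mul ((measurable_pi_apply i).comp hs)
  -- bound on ip
  have hipbd : ∀ x, |ip x| ≤ (pmix x * sqnorm (grad (fun y => Real.log (pmix y)) x)
      + pmix x * sqnorm (s x)) / 2 := by
    intro x
    set u : Fin D → ℝ := grad (fun y => Real.log (pmix y)) x with hu
    have hrw : ip x = ∑ i, (pmix x * u i) * s x i :=
      (Finset.sum_congr rfl fun i _ => by rw [hu, pa]).symm
    rw [hrw]
    calc |∑ i, (pmix x * u i) * s x i| ≤ ∑ i, |(pmix x * u i) * s x i| :=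
          Finset.abs_sum_le_sum_abs _ _
      _ ≤ ∑ i, pmix x * ((u i) ^ 2 + (s x i) ^ 2) / 2 := by
          refine Finset.sum_le_sum fun i _ => ?_
          rw [abs_mul, abs_mul, abs_of_nonneg (hpmixpos x).le]
          nlinarith [sq_nonneg (|u i| - |s x i|), sq_abs (u i), sq_abs (s x i),
            abs_nonneg (u i), abs_nonneg (s x i), (hpmixpos x).le,
            mul_nonneg (abs_nonneg (u i)) (abs_nonneg (s x i))]
      _ = (pmix x * sqnorm u + pmix x * sqnorm (s x)) / 2 := by
          simp only [sqnorm, Finset.mul_sum, ← Finset.sum_add_distrib, ← Finset.sum_div]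
          congr 1
          exact Finset.sum_congr rfl fun i _ => by ring
  have hip : Integrable ip := by
    have hsum : Integrable (fun x => (pmix x * sqnorm (grad (fun y => Real.log (pmix y)) x)
        + pmix x * sqnorm (s x)) / 2) := (h1.add h3).div_const 2
    exact hsum.mono' hipmeas.aestronglyMeasurable
      (Filter.Eventually.of_forall fun x => by rw [Real.norm_eq_abs]; exact hipbd x)
  -- step A
  have hA : ∀ x, pmix x * sqnorm (grad (fun y => Real.log (pmix y)) x - s x)
      = pmix x * sqnorm (grad (fun y => Real.log (pmix y)) x) - 2 * ip x
        + pmix x * sqnorm (s x) := by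
    intro x
    have h : ∑ i, (pmix x * grad (fun y => Real.log (pmix y)) x i) * s x i = ip x :=
      Finset.sum_congr rfl fun i _ => by rw [pa]
    rw [sqnorm_sub_expand, h]
  have eqA : (∫ x, pmix x * sqnorm (grad (fun y => Real.log (pmix y)) x - s x))
      = (∫ x, pmix x * sqnorm (grad (fun y => Real.log (pmix y)) x)) - 2 * (∫ x, ip x)
        + ∫ x, pmix x * sqnorm (s x) := by
    have hI1 : Integrable (fun x => pmix x * sqnorm (grad (fun y => Real.log (pmix y)) x)
        - 2 * ip x) := h1.sub (hip.const_mul 2)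
    have hI2 : Integrable (fun x => 2 * ip x) := hip.const_mul 2
    simp only [hA]
    rw [integral_add hI1 h3, integral_sub h1 hI2, integral_const_mul]
  -- swapped integrability
  have h2s : Integrable (fun p : (Fin D → ℝ) × Θ =>
      k p.2 p.1 * sqnorm (grad (fun y => Real.log (k p.2 y)) p.1))
      ((volume : Measure (Fin D → ℝ)).prod μ) := h2.swap
  have hgI : Integrable (fun x => ∫ θ, k θ x
      * sqnorm (grad (fun y => Real.log (k θ y)) x) ∂μ) := h2s.integral_prod_left
  have hae : ∀ᵐ x ∂(volume : Measure (Fin D → ℝ)),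
      Integrable (fun θ => k θ x * sqnorm (grad (fun y => Real.log (k θ y)) x)) μ :=
    h2s.prod_right_ae
  -- step B
  have hB : ∀ᵐ x ∂(volume : Measure (Fin D → ℝ)),
      (∫ θ, k θ x * sqnorm (grad (fun y => Real.log (k θ y)) x - s x) ∂μ)
        = (∫ θ, k θ x * sqnorm (grad (fun y => Real.log (k θ y)) x) ∂μ) - 2 * ip x
          + pmix x * sqnorm (s x) := by
    filter_upwards [hae] with x hx
    have hgradcomp : ∀ i, Integrable (fun θ => grad (k θ) x i) μ := by
      intro i
      refine (hpmixgradint x).norm.mono' ?_ ?_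
      · exact (ContinuousLinearMap.proj (R := ℝ) (φ := fun _ : Fin D => ℝ)
          i).continuous.comp_aestronglyMeasurable (hpmixgradint x).aestronglyMeasurable
      · exact Filter.Eventually.of_forall fun θ => by
          simpa using norm_le_pi_norm (grad (k θ) x) i
    have hcross : Integrable (fun θ => ∑ i, grad (k θ) x i * s x i) μ :=
      integrable_finset_sum _ fun i _ => (hgradcomp i).mul_const _
    have hconst : Integrable (fun θ => k θ x * sqnorm (s x)) μ := (hpmixint x).mul_const _
    have hptw : ∀ θ, k θ x * sqnorm (grad (fun y => Real.log (k θ y)) x - s x)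
        = k θ x * sqnorm (grad (fun y => Real.log (k θ y)) x)
            - 2 * (∑ i, grad (k θ) x i * s x i) + k θ x * sqnorm (s x) := by
      intro θ
      have h : ∑ i, (k θ x * grad (fun y => Real.log (k θ y)) x i) * s x i
          = ∑ i, grad (k θ) x i * s x i :=
        Finset.sum_congr rfl fun i _ => by rw [kb]
      rw [sqnorm_sub_expand, h]
    have hI1 : Integrable (fun θ => k θ x * sqnorm (grad (fun y => Real.log (k θ y)) x)
        - 2 * ∑ i, grad (k θ) x i * s x i) μ := hx.sub (hcross.const_mul 2)
    have hI2 : Integrable (fun θ => 2 * ∑ i, grad (k θ) x i * s x i) μ :=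
      hcross.const_mul 2
    simp only [hptw]
    rw [integral_add hI1 hconst, integral_sub hx hI2, integral_const_mul]
    have e1 : (∫ θ, ∑ i, grad (k θ) x i * s x i ∂μ) = ip x := by
      rw [integral_finset_sum _ fun i _ => (hgradcomp i).mul_const _]
      refine Finset.sum_congr rfl fun i _ => ?_
      rw [integral_mul_const]
      congr 1
      have h := (ContinuousLinearMap.proj (R := ℝ) (φ := fun _ : Fin D => ℝ)
        i).integral_comp_comm (hpmixgradint x)
      simpa [hpmixgrad x] using h
    have e2 : (∫ θ, k θ x * sqnorm (s x) ∂μ) = pmix x * sqnorm (s x) := by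
      rw [integral_mul_const, ← hpmix x]
    rw [e1, e2]
  have eqB : (∫ x, ∫ θ, k θ x * sqnorm (grad (fun y => Real.log (k θ y)) x - s x) ∂μ)
      = (∫ x, ∫ θ, k θ x * sqnorm (grad (fun y => Real.log (k θ y)) x) ∂μ)
        - 2 * (∫ x, ip x) + ∫ x, pmix x * sqnorm (s x) := by
    have hI1 : Integrable (fun x => (∫ θ, k θ x
        * sqnorm (grad (fun y => Real.log (k θ y)) x) ∂μ) - 2 * ip x) :=
      hgI.sub (hip.const_mul 2)
    have hI2 : Integrable (fun x => 2 * ip x) := hip.const_mul 2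
    rw [integral_congr_ae hB, integral_add hI1 h3, integral_sub hgI hI2, integral_const_mul]
  rw [eqA, eqB]
  ring
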